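/- arXiv:2302.12082 — 2 statements merged into one kernel-verified Lean document; each statement's English description precedes it below -/
import Mathlib

section
/- Let $\alpha, \beta \in \mathbb{C}$ be fixed. Then as real $z \to \infty$, $\frac{\Gamma(z+\alpha)}{\Gamma(z+\beta)} = z^{\alpha-\beta}\left(1 + \frac{(\alpha-\beta)(\alpha+\beta-1)}{2z} + O(z^{-2})\right)$. -/
open Filter Asymptotics Topology Complex

section GammaRatioAux

noncomputable def Hfun (α β : ℂ) (w : ℝ) : ℂ :=
  Complex.Gamma (w + α) / Complex.Gamma (w + β) * Complex.exp (-((α - β) * (Real.log w : ℂ)))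

noncomputable def dfun (α β : ℂ) (w : ℝ) : ℂ :=
  Complex.log (1 + α/w) - Complex.log (1 + β/w) - (α - β) * Complex.log (1 + 1/(w:ℂ))

noncomputable def cc (α β : ℂ) : ℂ := (α - β) * (α + β - 1) / 2

noncomputable def W0 (α β : ℂ) : ℝ := 2*‖α‖ + 2*‖β‖ + 2

noncomputable def Cst (α β : ℂ) : ℝ := ‖α‖^3 + ‖β‖^3 + ‖α-β‖

variable {α β : ℂ} {w z : ℝ}

lemma logTaylor_three (x : ℂ) : Complex.logTaylor 3 x = x - x^2/2 := by
  simp [Complex.logTaylor, Finset.sum_range_succ]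
  ring

lemma logR_le {x : ℂ} (hx : ‖x‖ ≤ 1/2) : ‖Complex.log (1+x) - x + x^2/2‖ ≤ ‖x‖^3 := by
  have h1 : ‖x‖ < 1 := lt_of_le_of_lt hx (by norm_num)
  have key := Complex.norm_log_sub_logTaylor_le 2 h1
  rw [logTaylor_three] at key
  have h2 : Complex.log (1+x) - x + x^2/2 = Complex.log (1+x) - (x - x^2/2) := by ring
  rw [h2]
  refine key.trans ?_
  have hnn : (0:ℝ) ≤ ‖x‖ := norm_nonneg _
  have h3 : (1 - ‖x‖)⁻¹ ≤ 2 := by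
    have h4 : (1:ℝ)/2 ≤ 1 - ‖x‖ := by linarith
    have := inv_anti₀ (by norm_num : (0:ℝ) < 1/2) h4
    simpa using this
  push_cast
  have hp : (0:ℝ) ≤ ‖x‖^3 := by positivity
  have hi : (0:ℝ) ≤ (1-‖x‖)⁻¹ := inv_nonneg.mpr (by linarith)
  nlinarith [mul_le_mul_of_nonneg_left h3 hp]

variable {z : ℝ}

lemma S0 (hz : 1 ≤ z) (k : ℕ) : 0 < z + k := by positivity

lemma hterm (hz : 1 ≤ z) : ∀ k : ℕ, 1/((z+k)*(z+k+1)) = 1/(z+k) - 1/(z+k+1) := by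
  intro k
  have h1 := S0 hz k
  have h2 : (0:ℝ) < z + k + 1 := by linarith
  field_simp
  ring

lemma S1 (hz : 1 ≤ z) : HasSum (fun k : ℕ => 1/((z+k)*(z+k+1))) (1/z) := by
  have hpos : ∀ k : ℕ, (0:ℝ) < z + k := S0 hz
  rw [show (fun k : ℕ => 1/((z+k)*(z+k+1))) = fun k : ℕ => 1/(z+k) - 1/(z+k+1) from
    funext (hterm hz)]
  rw [hasSum_iff_tendsto_nat_of_nonneg]
  · have hps : ∀ n : ℕ, ∑ i ∈ Finset.range n, (1/(z+i) - 1/(z+i+1)) = 1/z - 1/(z+n) := by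
      intro n
      have := Finset.sum_range_sub' (fun i : ℕ => 1/(z+i)) n
      simpa [add_assoc] using this
    simp only [hps]
    have h5 : Tendsto (fun n : ℕ => 1/(z+n)) atTop (𝓝 0) := by
      simp only [one_div]
      exact tendsto_inv_atTop_zero.comp
        (tendsto_atTop_add_const_left _ z tendsto_natCast_atTop_atTop)
    simpa using tendsto_const_nhds.sub h5
  · intro k
    rw [← hterm hz k]
    have h1 := hpos k
    have h2 : (0:ℝ) < z + k + 1 := by linarith
    positivity

lemma S2 (hz : 1 ≤ z) : Summable (fun k : ℕ => 1/(z+k)^2) := by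
  rw [← summable_nat_add_iff 1]
  apply Summable.of_nonneg_of_le (fun k => by positivity) (fun k => ?_) (S1 hz).summable
  have h1 := S0 hz k
  push_cast
  rw [div_le_div_iff₀ (by positivity) (by positivity)]
  nlinarith

lemma S3 (hz : 1 ≤ z) : ∑' k : ℕ, 1/(z+k)^2 ≤ 1/z + 1/z^2 := by
  have hsplit := Summable.tsum_eq_zero_add (f := fun k : ℕ => 1/(z+k)^2) (S2 hz)
  rw [hsplit]
  have hsum1 : Summable (fun k : ℕ => 1/(z+(↑(k+1):ℝ))^2) := by
    have := (summable_nat_add_iff (f := fun k : ℕ => 1/(z+k)^2) 1).mpr (S2 hz)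
    exact this
  have h1 : ∑' k : ℕ, 1/(z+(↑(k+1):ℝ))^2 ≤ 1/z := by
    rw [← (S1 hz).tsum_eq]
    refine Summable.tsum_le_tsum (fun k => ?_) hsum1 (S1 hz).summable
    have h1 := S0 hz k
    push_cast
    rw [div_le_div_iff₀ (by positivity) (by positivity)]
    nlinarith
  push_cast at h1 ⊢
  simp only [Nat.cast_zero, add_zero]
  linarith

lemma S4 (hz : 1 ≤ z) : 1/z ≤ ∑' k : ℕ, 1/(z+k)^2 := by
  rw [← (S1 hz).tsum_eq]
  apply Summable.tsum_le_tsum (fun k => ?_) (S1 hz).summable (S2 hz)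
  have h1 := S0 hz k
  rw [div_le_div_iff₀ (by positivity) (by positivity)]
  nlinarith

lemma S5 (hz : 1 ≤ z) : Summable (fun k : ℕ => 1/(z+k)^3) := by
  apply Summable.of_nonneg_of_le (fun k => by positivity) (fun k => ?_) (S2 hz)
  have h1 := S0 hz k
  rw [div_le_div_iff₀ (by positivity) (by positivity)]
  nlinarith

lemma S6 (hz : 1 ≤ z) : ∑' k : ℕ, 1/(z+k)^3 ≤ 2/z^2 := by
  have hz0 : (0:ℝ) < z := by linarith
  have step : ∀ k : ℕ, 1/(z+k)^3 ≤ (1/z) * (1/(z+k)^2) := by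
    intro k
    have h1 := S0 hz k
    rw [div_mul_div_comm, one_mul, div_le_div_iff₀ (by positivity) (by positivity)]
    nlinarith
  calc ∑' k : ℕ, 1/(z+k)^3 ≤ ∑' k : ℕ, (1/z) * (1/(z+k)^2) :=
        Summable.tsum_le_tsum step (S5 hz) ((S2 hz).mul_left _)
    _ = (1/z) * ∑' k : ℕ, 1/(z+k)^2 := tsum_mul_left
    _ ≤ (1/z) * (1/z + 1/z^2) := by
        apply mul_le_mul_of_nonneg_left (S3 hz) (by positivity)
    _ ≤ 2/z^2 := by
        rw [show (1:ℝ)/z*(1/z+1/z^2) = 1/z^2 + 1/z^3 by field_simp]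
        have h2 : 1/z^3 ≤ 1/z^2 := by
          apply one_div_le_one_div_of_le (by positivity)
          nlinarith
        rw [show (2:ℝ)/z^2 = 1/z^2 + 1/z^2 by ring]
        linarith





variable {α β : ℂ} {w : ℝ}

lemma W0_ge_two : 2 ≤ W0 α β := by
  have := norm_nonneg α; have := norm_nonneg β
  rw [W0]; linarith

lemma w_pos (hw : W0 α β ≤ w) : 0 < w := lt_of_lt_of_le (by linarith [W0_ge_two (α := α) (β := β)]) hw

lemma norm_div_le_half (hw : W0 α β ≤ w) {γ : ℂ} (hγ : ‖γ‖ ≤ ‖α‖ + ‖β‖ + 1) :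
    ‖γ/(w:ℂ)‖ ≤ 1/2 := by
  have hw0 := w_pos hw
  rw [norm_div, Complex.norm_real, Real.norm_eq_abs, abs_of_pos hw0, div_le_iff₀ hw0]
  have : 2*‖α‖ + 2*‖β‖ + 2 ≤ w := hw
  linarith

lemma norm_a_le : ‖α‖ ≤ ‖α‖ + ‖β‖ + 1 := by have := norm_nonneg β; linarith
lemma norm_b_le : ‖β‖ ≤ ‖α‖ + ‖β‖ + 1 := by have := norm_nonneg α; linarith
lemma norm_o_le : ‖(1:ℂ)‖ ≤ ‖α‖ + ‖β‖ + 1 := by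
  have := norm_nonneg α; have := norm_nonneg β; rw [norm_one]; linarith

lemma one_add_ne (hx : ‖(x : ℂ)‖ ≤ 1/2) : (1 : ℂ) + x ≠ 0 := by
  intro h
  have : x = -1 := by linear_combination h
  rw [this] at hx; simp at hx; linarith

lemma re_pos_a (hw : W0 α β ≤ w) : 0 < ((w:ℂ) + α).re := by
  have h1 : |α.re| ≤ ‖α‖ := Complex.abs_re_le_norm α
  have h2 : (2:ℝ)*‖α‖ + 2*‖β‖ + 2 ≤ w := hw
  have := norm_nonneg β
  simp only [Complex.add_re, Complex.ofReal_re]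
  cases abs_le.mp h1 with | intro h _ => linarith

lemma Gamma_ne_zero_re_pos {s : ℂ} (hs : 0 < s.re) : Complex.Gamma s ≠ 0 := by
  apply Complex.Gamma_ne_zero
  intro m h
  rw [h] at hs
  simp only [Complex.neg_re, Complex.natCast_re] at hs
  have : (0:ℝ) ≤ m := Nat.cast_nonneg m
  linarith

lemma re_pos_b (hw : W0 α β ≤ w) : 0 < ((w:ℂ) + β).re := by
  have : W0 β α ≤ w := by rw [W0] at *; linarith [hw]
  exact re_pos_a this

lemma log_one_add_inv (hw : W0 α β ≤ w) :
    Complex.log (1 + 1/(w:ℂ)) = ((Real.log (w+1) : ℝ) : ℂ) - ((Real.log w : ℝ) : ℂ) := by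
  have hw0 := w_pos hw
  have hwC : (w:ℂ) ≠ 0 := by exact_mod_cast ne_of_gt hw0
  have h1 : (1 : ℂ) + 1/(w:ℂ) = (((w+1)/w : ℝ) : ℂ) := by
    push_cast
    rw [add_div, div_self hwC, add_comm]
  rw [h1, ← Complex.ofReal_log (by positivity)]
  rw [Real.log_div (by linarith) (by linarith)]
  push_cast
  ring

lemma Hstep (hw : W0 α β ≤ w) : Hfun α β (w+1) = Complex.exp (dfun α β w) * Hfun α β w := by
  have hw0 := w_pos hw
  have hwC : (w:ℂ) ≠ 0 := by exact_mod_cast ne_of_gt hw0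
  have hane : ((w:ℂ) + α) ≠ 0 := fun h => by simpa [h] using re_pos_a hw
  have hbne : ((w:ℂ) + β) ≠ 0 := fun h => by simpa [h] using re_pos_b hw
  have hΓb : Complex.Gamma ((w:ℂ) + β) ≠ 0 := Gamma_ne_zero_re_pos (re_pos_b hw)
  have h1a : (1 : ℂ) + α/(w:ℂ) ≠ 0 := one_add_ne (norm_div_le_half hw norm_a_le)
  have h1b : (1 : ℂ) + β/(w:ℂ) ≠ 0 := one_add_ne (norm_div_le_half hw norm_b_le)
  have hGa : Complex.Gamma (((w+1:ℝ):ℂ) + α) = ((w:ℂ)+α) * Complex.Gamma ((w:ℂ)+α) := by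
    rw [show ((w+1:ℝ):ℂ) + α = ((w:ℂ) + α) + 1 by push_cast; ring]
    exact Complex.Gamma_add_one _ hane
  have hGb : Complex.Gamma (((w+1:ℝ):ℂ) + β) = ((w:ℂ)+β) * Complex.Gamma ((w:ℂ)+β) := by
    rw [show ((w+1:ℝ):ℂ) + β = ((w:ℂ) + β) + 1 by push_cast; ring]
    exact Complex.Gamma_add_one _ hbne
  have edf : Complex.exp (dfun α β w) =
      (1 + α/(w:ℂ)) * (1 + β/(w:ℂ))⁻¹ *
        Complex.exp (-((α-β) * ((Real.log (w+1) : ℝ):ℂ)) + (α-β) * ((Real.log w : ℝ):ℂ)) := by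
    rw [dfun, log_one_add_inv hw,
      show Complex.log (1+α/(w:ℂ)) - Complex.log (1+β/(w:ℂ))
          - (α-β)*(((Real.log (w+1):ℝ):ℂ) - ((Real.log w:ℝ):ℂ))
        = Complex.log (1+α/(w:ℂ)) + (-(Complex.log (1+β/(w:ℂ))))
          + (-((α-β) * ((Real.log (w+1):ℝ):ℂ)) + (α-β)*((Real.log w:ℝ):ℂ)) from by ring]
    rw [Complex.exp_add, Complex.exp_add, Complex.exp_neg, Complex.exp_log h1a,
      Complex.exp_log h1b]
  rw [Hfun, Hfun, edf, hGa, hGb]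
  rw [show (1 + α/(w:ℂ)) * (1 + β/(w:ℂ))⁻¹ *
        Complex.exp (-((α-β) * ((Real.log (w+1) : ℝ):ℂ)) + (α-β) * ((Real.log w : ℝ):ℂ)) *
        (Complex.Gamma ((w:ℂ)+α) / Complex.Gamma ((w:ℂ)+β) *
          Complex.exp (-((α - β) * ((Real.log w : ℝ) : ℂ))))
      = (1 + α/(w:ℂ)) * (1 + β/(w:ℂ))⁻¹ *
        (Complex.Gamma ((w:ℂ)+α) / Complex.Gamma ((w:ℂ)+β)) *
        (Complex.exp (-((α-β) * ((Real.log (w+1) : ℝ):ℂ)) + (α-β) * ((Real.log w : ℝ):ℂ)) *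
          Complex.exp (-((α - β) * ((Real.log w : ℝ) : ℂ)))) from by ring]
  rw [← Complex.exp_add]
  rw [show -((α-β) * ((Real.log (w+1) : ℝ):ℂ)) + (α-β) * ((Real.log w : ℝ):ℂ)
        + -((α - β) * ((Real.log w : ℝ) : ℂ)) = -((α-β) * ((Real.log (w+1) : ℝ):ℂ)) from by ring]
  have hsc : (1 + α/(w:ℂ)) * (1 + β/(w:ℂ))⁻¹ *
      (Complex.Gamma ((w:ℂ)+α) / Complex.Gamma ((w:ℂ)+β))
      = ((w:ℂ)+α) * Complex.Gamma ((w:ℂ)+α) / (((w:ℂ)+β) * Complex.Gamma ((w:ℂ)+β)) := by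
    field_simp
  rw [hsc]

lemma norm_div_cube (hw : 0 < w) (γ : ℂ) : ‖γ/(w:ℂ)‖^3 = ‖γ‖^3 / w^3 := by
  rw [norm_div, Complex.norm_real, Real.norm_eq_abs, abs_of_pos hw, div_pow]

lemma delta_est (hw : W0 α β ≤ w) :
    ‖dfun α β w + cc α β / (w:ℂ)^2‖ ≤ Cst α β / w^3 := by
  simp only [Cst]
  have hw0 := w_pos hw
  have hwC : (w:ℂ) ≠ 0 := by exact_mod_cast ne_of_gt hw0
  have hid : dfun α β w + cc α β/(w:ℂ)^2 =
      (Complex.log (1+α/(w:ℂ)) - α/(w:ℂ) + (α/(w:ℂ))^2/2)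
      - (Complex.log (1+β/(w:ℂ)) - β/(w:ℂ) + (β/(w:ℂ))^2/2)
      - (α-β) * (Complex.log (1+1/(w:ℂ)) - 1/(w:ℂ) + (1/(w:ℂ))^2/2) := by
    rw [dfun, cc]
    field_simp
    ring
  rw [hid]
  have bA := logR_le (norm_div_le_half hw (norm_a_le (α := α) (β := β)))
  have bB := logR_le (norm_div_le_half hw (norm_b_le (α := α) (β := β)))
  have bO := logR_le (norm_div_le_half hw (norm_o_le (α := α) (β := β)))
  have tri : ∀ A B C : ℂ, ‖A - B - C‖ ≤ ‖A‖ + ‖B‖ + ‖C‖ := by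
    intro A B C
    calc ‖A - B - C‖ ≤ ‖A - B‖ + ‖C‖ := norm_sub_le _ _
      _ ≤ ‖A‖ + ‖B‖ + ‖C‖ := by linarith [norm_sub_le A B]
  refine (tri _ _ _).trans ?_
  rw [norm_mul]
  have h3 : ‖(α-β) * (Complex.log (1+1/(w:ℂ)) - 1/(w:ℂ) + (1/(w:ℂ))^2/2)‖ ≤ ‖α-β‖ * (1/w^3) := by
    rw [norm_mul]
    apply mul_le_mul_of_nonneg_left (bO.trans ?_) (norm_nonneg _)
    rw [norm_div_cube hw0]
    simp
  have e1 : ‖α/(w:ℂ)‖^3 = ‖α‖^3/w^3 := norm_div_cube hw0 α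
  have e2 : ‖β/(w:ℂ)‖^3 = ‖β‖^3/w^3 := norm_div_cube hw0 β
  have e3 : ‖(1:ℂ)/(w:ℂ)‖^3 = 1/w^3 := by rw [norm_div_cube hw0]; simp
  rw [e1] at bA; rw [e2] at bB; rw [e3] at bO
  have hne : (0:ℝ) < w^3 := by positivity
  have := norm_nonneg (α - β)
  have h4 : ‖α-β‖ * ‖Complex.log (1+1/(w:ℂ)) - 1/(w:ℂ) + (1/(w:ℂ))^2/2‖ ≤ ‖α-β‖ * (1/w^3) :=
    mul_le_mul_of_nonneg_left bO (norm_nonneg _)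
  rw [show (‖α‖^3 + ‖β‖^3 + ‖α-β‖)/w^3 = ‖α‖^3/w^3 + ‖β‖^3/w^3 + ‖α-β‖ * (1/w^3) by ring]
  linarith

lemma Gamma_prod {s : ℂ} (hs : 0 < s.re) (n : ℕ) :
    Complex.Gamma (s + n) = Complex.Gamma s * ∏ j ∈ Finset.range n, (s + j) := by
  induction n with
  | zero => simp
  | succ n ih =>
    have hre : 0 < (s + (n:ℂ)).re := by
      simp only [Complex.add_re, Complex.natCast_re]
      have : (0:ℝ) ≤ n := Nat.cast_nonneg n
      linarith
    have hne : s + (n:ℂ) ≠ 0 := fun h => by rw [h] at hre; simp at hre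
    rw [show s + ((n+1 : ℕ):ℂ) = (s + n) + 1 by push_cast; ring,
      Complex.Gamma_add_one _ hne, ih, Finset.prod_range_succ]
    ring

lemma prod_ne_zero' {s : ℂ} (hs : 0 < s.re) (n : ℕ) :
    ∏ j ∈ Finset.range n, (s + (j:ℂ)) ≠ 0 := by
  apply Finset.prod_ne_zero_iff.mpr
  intro j _
  have hre : 0 < (s + (j:ℂ)).re := by
    simp only [Complex.add_re, Complex.natCast_re]
    have : (0:ℝ) ≤ j := Nat.cast_nonneg j
    linarith
  exact fun h => by rw [h] at hre; simp at hre

lemma alg {E1 E2 E3 F Pa Pb Ga Gb : ℂ} (hE1 : E1 ≠ 0) (hE2 : E2 ≠ 0) (hF : F ≠ 0)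
    (hPb : Pb ≠ 0) (hGb : Gb ≠ 0) :
    (E2 * F / Pb) / (E1 * F / Pa) * (Ga / Gb) * (E1 * E2⁻¹ * E3)
      = Ga * Pa / (Gb * Pb) * E3 := by
  field_simp

lemma tendsto_H (hz : W0 α β ≤ z) :
    Tendsto (fun n : ℕ => Hfun α β (z + n)) atTop (𝓝 1) := by
  set a : ℂ := (z:ℂ) + α with ha
  set b : ℂ := (z:ℂ) + β with hb
  have hza := re_pos_a hz
  have hzb := re_pos_b hz
  have hz0 := w_pos hz
  have hΓa : Complex.Gamma a ≠ 0 := Gamma_ne_zero_re_pos hza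
  have hΓb : Complex.Gamma b ≠ 0 := Gamma_ne_zero_re_pos hzb
  -- limit of the exponential factor
  have h0 : Tendsto (fun n : ℕ => (z+1)/(n:ℝ)) atTop (𝓝 0) :=
    tendsto_const_div_atTop_nhds_zero_nat (z+1)
  have hlog : Tendsto (fun n : ℕ => Real.log n - Real.log (z+n+1)) atTop (𝓝 0) := by
    have h1 : Tendsto (fun n : ℕ => Real.log (1 + (z+1)/n)) atTop (𝓝 0) := by
      have h2 := (Real.continuousAt_log (by norm_num : (1:ℝ)+0 ≠ 0)).tendsto.comp
        (tendsto_const_nhds.add h0)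
      simpa [Function.comp_def] using h2
    have h3 : Tendsto (fun n : ℕ => -Real.log (1 + (z+1)/n)) atTop (𝓝 0) := by
      simpa using h1.neg
    apply h3.congr'
    filter_upwards [eventually_ge_atTop 1] with n hn
    have hn0 : (0:ℝ) < n := by exact_mod_cast hn
    rw [show 1 + (z+1)/(n:ℝ) = (z+n+1)/n by field_simp; ring,
      Real.log_div (by linarith) (by linarith)]
    ring
  have hexp : Tendsto (fun n : ℕ =>
      Complex.exp ((α-β) * ((Real.log n : ℂ) - (Real.log (z+n+1) : ℂ)))) atTop (𝓝 1) := by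
    have hcont : Continuous fun t : ℝ => Complex.exp ((α-β) * (t:ℂ)) := by continuity
    have := (hcont.tendsto 0).comp hlog
    simp only [Function.comp_def, Complex.ofReal_sub] at this
    simpa using this
  -- limit of the GammaSeq ratio
  have hratio : Tendsto (fun n : ℕ => Complex.GammaSeq b n / Complex.GammaSeq a n)
      atTop (𝓝 (Complex.Gamma b / Complex.Gamma a)) :=
    (Complex.GammaSeq_tendsto_Gamma b).div (Complex.GammaSeq_tendsto_Gamma a) hΓa
  have hT : Tendsto (fun n : ℕ => Complex.GammaSeq b n / Complex.GammaSeq a n *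
      (Complex.Gamma a / Complex.Gamma b) *
      Complex.exp ((α-β) * ((Real.log n : ℂ) - (Real.log (z+n+1) : ℂ)))) atTop (𝓝 1) := by
    have := (hratio.mul (tendsto_const_nhds (x := Complex.Gamma a / Complex.Gamma b))).mul hexp
    rw [show Complex.Gamma b / Complex.Gamma a * (Complex.Gamma a / Complex.Gamma b) * 1
      = 1 by field_simp] at this
    exact this
  rw [← tendsto_add_atTop_iff_nat 1]
  apply hT.congr'
  filter_upwards [eventually_ge_atTop 1] with n hn
  have hn0 : (0:ℝ) < n := by exact_mod_cast hn
  have hnC : (n:ℂ) ≠ 0 := by exact_mod_cast ne_of_gt hn0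
  have hfac : ((n.factorial : ℕ):ℂ) ≠ 0 := by exact_mod_cast Nat.factorial_ne_zero n
  -- rewrite cpow as exp
  have hlogn : Complex.log (n:ℂ) = ((Real.log n : ℝ):ℂ) := by
    rw [show ((n:ℕ):ℂ) = ((n:ℝ):ℂ) by push_cast; rfl, ← Complex.ofReal_log (le_of_lt hn0)]
  have hcpa : (n:ℂ) ^ a = Complex.exp (a * ((Real.log n : ℝ):ℂ)) := by
    rw [Complex.cpow_def_of_ne_zero hnC, hlogn, mul_comm]
  have hcpb : (n:ℂ) ^ b = Complex.exp (b * ((Real.log n : ℝ):ℂ)) := by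
    rw [Complex.cpow_def_of_ne_zero hnC, hlogn, mul_comm]
  -- the Gamma values at shifted argument
  have hwn : W0 α β ≤ z + (n+1:ℕ) := by
    have : (0:ℝ) ≤ (n+1:ℕ) := Nat.cast_nonneg _
    linarith
  have hGa' : Complex.Gamma (((z + (n+1:ℕ) : ℝ):ℂ) + α)
      = Complex.Gamma a * ∏ j ∈ Finset.range (n+1), (a + j) := by
    rw [show ((z + (n+1:ℕ) : ℝ):ℂ) + α = a + ((n+1:ℕ):ℂ) by push_cast; ring]
    exact Gamma_prod hza (n+1)
  have hGb' : Complex.Gamma (((z + (n+1:ℕ) : ℝ):ℂ) + β)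
      = Complex.Gamma b * ∏ j ∈ Finset.range (n+1), (b + j) := by
    rw [show ((z + (n+1:ℕ) : ℝ):ℂ) + β = b + ((n+1:ℕ):ℂ) by push_cast; ring]
    exact Gamma_prod hzb (n+1)
  have hpa := prod_ne_zero' hza (n+1)
  have hpb := prod_ne_zero' hzb (n+1)
  -- combine the exponentials
  have eexp : Complex.exp ((α-β) * ((Real.log n : ℂ) - (Real.log (z+n+1) : ℂ)))
      = Complex.exp (a * ((Real.log n : ℝ):ℂ)) * (Complex.exp (b * ((Real.log n : ℝ):ℂ)))⁻¹ *
        Complex.exp (-((α-β) * ((Real.log (z+n+1) : ℝ):ℂ))) := by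
    rw [← Complex.exp_neg, ← Complex.exp_add, ← Complex.exp_add]
    congr 1
    rw [ha, hb]
    ring
  show Complex.GammaSeq b n / Complex.GammaSeq a n * (Complex.Gamma a / Complex.Gamma b) *
      Complex.exp ((α-β) * ((Real.log n : ℂ) - (Real.log (z+n+1) : ℂ)))
    = Hfun α β (z + ((n+1:ℕ):ℝ))
  rw [eexp, Hfun, Complex.GammaSeq, Complex.GammaSeq, hcpa, hcpb]
  rw [hGa', hGb']
  rw [show Real.log (z + ((n+1:ℕ):ℝ)) = Real.log (z+n+1) by push_cast; ring_nf]
  exact alg (Complex.exp_ne_zero _) (Complex.exp_ne_zero _) hfac hpb hΓb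

lemma Cst_nonneg : 0 ≤ Cst α β := by
  rw [Cst]; positivity

lemma one_le_z (hz : W0 α β ≤ z) : 1 ≤ z := by
  have := W0_ge_two (α := α) (β := β); linarith

lemma W0_le_add (hz : W0 α β ≤ z) (k : ℕ) : W0 α β ≤ z + k := by
  have : (0:ℝ) ≤ k := Nat.cast_nonneg k; linarith

lemma zk_pos (hz : W0 α β ≤ z) (k : ℕ) : (0:ℝ) < z + k := by
  have := one_le_z hz; positivity

lemma zkC_ne (hz : W0 α β ≤ z) (k : ℕ) : (((z+k : ℝ)):ℂ) ≠ 0 := by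
  exact_mod_cast ne_of_gt (zk_pos hz k)

lemma norm_cc_div_sq (hz : W0 α β ≤ z) (k : ℕ) :
    ‖cc α β / (((z+k:ℝ)):ℂ)^2‖ = ‖cc α β‖ * (1/(z+k)^2) := by
  rw [norm_div, norm_pow, Complex.norm_real, Real.norm_eq_abs, abs_of_pos (zk_pos hz k)]
  ring

lemma norm_dfun_le (hz : W0 α β ≤ z) (k : ℕ) :
    ‖dfun α β (z+k)‖ ≤ (Cst α β + ‖cc α β‖) * (1/(z+k)^2) := by
  have h1 := delta_est (W0_le_add hz k)
  have h2 := norm_cc_div_sq hz k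
  have h3 : ‖dfun α β (z+k)‖ ≤ ‖dfun α β (z+k) + cc α β / (((z+k:ℝ)):ℂ)^2‖
      + ‖cc α β / (((z+k:ℝ)):ℂ)^2‖ := by
    have := norm_sub_le (dfun α β (z+k) + cc α β / (((z+k:ℝ)):ℂ)^2) (cc α β / (((z+k:ℝ)):ℂ)^2)
    simpa using this
  have hzk := zk_pos hz k
  have hzk1 : 1 ≤ z + k := by have := one_le_z hz; have : (0:ℝ) ≤ k := Nat.cast_nonneg k; linarith
  have h4 : Cst α β / (z+k)^3 ≤ Cst α β * (1/(z+k)^2) := by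
    rw [div_le_iff₀ (by positivity)]
    have h5 : (z+k)^2 ≤ (z+k)^3 := by nlinarith
    have h6 : Cst α β * (z+k)^2 ≤ Cst α β * (z+k)^3 := by
      apply mul_le_mul_of_nonneg_left h5 Cst_nonneg
    rw [show Cst α β * (1/(z+k)^2) * (z+k)^3 = Cst α β * ((z+k)^3/(z+k)^2) by ring]
    rw [show (z+k)^3/(z+k)^2 = (z+k) by field_simp]
    nlinarith [Cst_nonneg (α := α) (β := β)]
  calc ‖dfun α β (z+k)‖ ≤ Cst α β / (z+k)^3 + ‖cc α β‖ * (1/(z+k)^2) := by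
        rw [← h2]; linarith
    _ ≤ (Cst α β + ‖cc α β‖) * (1/(z+k)^2) := by linarith [h4]; 
lemma summable_dfun (hz : W0 α β ≤ z) : Summable (fun k : ℕ => dfun α β (z+k)) := by
  apply Summable.of_norm
  apply Summable.of_nonneg_of_le (fun k => norm_nonneg _) (norm_dfun_le hz)
  exact (S2 (one_le_z hz)).mul_left _

lemma H_eq_exp (hz : W0 α β ≤ z) :
    Hfun α β z = Complex.exp (-∑' k : ℕ, dfun α β (z+k)) := by
  have tel : ∀ n : ℕ, Hfun α β (z+n)
      = Complex.exp (∑ k ∈ Finset.range n, dfun α β (z+k)) * Hfun α β z := by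
    intro n
    induction n with
    | zero => simp
    | succ n ih =>
      have harg : z + ((n+1:ℕ):ℝ) = (z + (n:ℕ)) + 1 := by push_cast; ring
      rw [harg, Hstep (W0_le_add hz n), ih, Finset.sum_range_succ, Complex.exp_add]
      ring
  have h1 : Tendsto (fun n : ℕ => Hfun α β (z+n)) atTop
      (𝓝 (Complex.exp (∑' k : ℕ, dfun α β (z+k)) * Hfun α β z)) := by
    rw [show (fun n : ℕ => Hfun α β (z+n))
      = fun n : ℕ => Complex.exp (∑ k ∈ Finset.range n, dfun α β (z+k)) * Hfun α β z
      from funext tel]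
    have h2 := (summable_dfun hz).hasSum.tendsto_sum_nat
    exact ((Complex.continuous_exp.tendsto _).comp h2).mul tendsto_const_nhds
  have h3 := tendsto_nhds_unique h1 (tendsto_H hz)
  have hne : Complex.exp (∑' k : ℕ, dfun α β (z+k)) ≠ 0 := Complex.exp_ne_zero _
  rw [Complex.exp_neg]
  exact eq_inv_of_mul_eq_one_right h3

lemma v_est (hz : W0 α β ≤ z) :
    ‖(-∑' k : ℕ, dfun α β (z+k)) - cc α β/(z:ℂ)‖ ≤ (2 * Cst α β + ‖cc α β‖)/z^2 := by
  have hz1 := one_le_z hz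
  have hz0 : (0:ℝ) < z := by linarith
  -- summability facts
  have hsumr : Summable (fun k : ℕ => ((1/(z+k)^2 : ℝ) : ℂ)) := by
    have := (S2 hz1).map (Complex.ofRealHom.toAddMonoidHom) Complex.continuous_ofReal
    exact this.congr (fun k => rfl)
  have hsumcc : Summable (fun k : ℕ => cc α β / (((z+k:ℝ)):ℂ)^2) := by
    apply (hsumr.mul_left (cc α β)).congr
    intro k
    have : (((z+k:ℝ)):ℂ)^2 = (((z+k)^2 : ℝ) : ℂ) := by push_cast; ring
    rw [this]
    push_cast
    ring
  have hsumT : Summable (fun k : ℕ => dfun α β (z+k) + cc α β / (((z+k:ℝ)):ℂ)^2) :=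
    (summable_dfun hz).add hsumcc
  -- bound on the T-sum
  have hTnorm : Summable (fun k : ℕ => ‖dfun α β (z+k) + cc α β / (((z+k:ℝ)):ℂ)^2‖) := by
    apply Summable.of_nonneg_of_le (fun k => norm_nonneg _)
      (fun k => delta_est (W0_le_add hz k)) ((S5 hz1).mul_left (Cst α β) |>.congr ?_)
    intro k
    ring
  have hTbound : ‖∑' k : ℕ, (dfun α β (z+k) + cc α β / (((z+k:ℝ)):ℂ)^2)‖ ≤ 2 * Cst α β / z^2 := by
    refine (norm_tsum_le_tsum_norm hTnorm).trans ?_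
    have h1 : ∑' k : ℕ, ‖dfun α β (z+k) + cc α β / (((z+k:ℝ)):ℂ)^2‖
        ≤ ∑' k : ℕ, Cst α β * (1/(z+k)^3) := by
      refine Summable.tsum_le_tsum (fun k => ?_) hTnorm ((S5 hz1).mul_left (Cst α β))
      have := delta_est (W0_le_add hz k)
      rw [show Cst α β * (1/(z+k)^3) = Cst α β / (z+k)^3 by ring]
      exact this
    rw [tsum_mul_left] at h1
    refine h1.trans ?_
    rw [show 2 * Cst α β / z^2 = Cst α β * (2/z^2) by ring]
    exact mul_le_mul_of_nonneg_left (S6 hz1) Cst_nonneg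
  -- split the sum
  have hsplit : (-∑' k : ℕ, dfun α β (z+k)) - cc α β/(z:ℂ)
      = -(∑' k : ℕ, (dfun α β (z+k) + cc α β / (((z+k:ℝ)):ℂ)^2))
        + cc α β * (((∑' k : ℕ, 1/(z+k)^2 : ℝ):ℂ) - ((1/z : ℝ):ℂ)) := by
    rw [Summable.tsum_add (summable_dfun hz) hsumcc]
    have e1 : ∑' k : ℕ, cc α β / (((z+k:ℝ)):ℂ)^2
        = cc α β * ((∑' k : ℕ, 1/(z+k)^2 : ℝ):ℂ) := by
      rw [Complex.ofReal_tsum, ← tsum_mul_left]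
      congr 1
      funext k
      have : (((z+k:ℝ)):ℂ)^2 = (((z+k)^2 : ℝ) : ℂ) := by push_cast; ring
      rw [this]
      push_cast
      ring
    rw [e1]
    push_cast
    ring
  rw [hsplit]
  have hS34 : |(∑' k : ℕ, 1/(z+k)^2) - 1/z| ≤ 1/z^2 := by
    rw [abs_le]
    constructor
    · have := S4 hz1; have h : (0:ℝ) < z^2 := by positivity
      have : (0:ℝ) ≤ (∑' k : ℕ, 1/(z+k)^2) - 1/z := by linarith [S4 hz1]
      have h2 : (0:ℝ) ≤ 1/z^2 := by positivity
      linarith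
    · linarith [S3 hz1]
  have hnorm2 : ‖cc α β * (((∑' k : ℕ, 1/(z+k)^2 : ℝ):ℂ) - ((1/z : ℝ):ℂ))‖
      ≤ ‖cc α β‖ * (1/z^2) := by
    rw [norm_mul]
    apply mul_le_mul_of_nonneg_left ?_ (norm_nonneg _)
    rw [← Complex.ofReal_sub, Complex.norm_real, Real.norm_eq_abs]
    exact hS34
  calc ‖-(∑' k : ℕ, (dfun α β (z+k) + cc α β / (((z+k:ℝ)):ℂ)^2))
        + cc α β * (((∑' k : ℕ, 1/(z+k)^2 : ℝ):ℂ) - ((1/z : ℝ):ℂ))‖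
      ≤ ‖∑' k : ℕ, (dfun α β (z+k) + cc α β / (((z+k:ℝ)):ℂ)^2)‖
        + ‖cc α β * (((∑' k : ℕ, 1/(z+k)^2 : ℝ):ℂ) - ((1/z : ℝ):ℂ))‖ := by
        refine (norm_add_le _ _).trans ?_
        rw [norm_neg]
    _ ≤ 2 * Cst α β / z^2 + ‖cc α β‖ * (1/z^2) := add_le_add hTbound hnorm2
    _ = (2 * Cst α β + ‖cc α β‖)/z^2 := by ring


end GammaRatioAux

/-- Two-term asymptotic expansion of the ratio of Gamma functions:
`Γ(z+α)/Γ(z+β) = z^(α-β) (1 + (α-β)(α+β-1)/(2z) + O(z⁻²))` as real `z → ∞`. -/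
theorem gamma_ratio_two_term (α β : ℂ) :
    (fun z : ℝ => Complex.Gamma ((z : ℂ) + α) / Complex.Gamma ((z : ℂ) + β) -
        (z : ℂ) ^ (α - β) * (1 + (α - β) * (α + β - 1) / (2 * (z : ℂ))))
      =O[atTop] fun z : ℝ => (z : ℂ) ^ (α - β) / (z : ℂ) ^ 2 := by
  set D1 : ℝ := 2 * Cst α β + ‖cc α β‖ with hD1
  set D : ℝ := D1 + ‖cc α β‖ with hD
  have hD1nn : 0 ≤ D1 := by
    have := Cst_nonneg (α := α) (β := β); have := norm_nonneg (cc α β); rw [hD1]; linarith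
  have hDnn : 0 ≤ D := by have := norm_nonneg (cc α β); rw [hD]; linarith
  apply IsBigO.of_bound (D^2 + D1)
  filter_upwards [eventually_ge_atTop (max (W0 α β) D)] with z hzm
  have hz : W0 α β ≤ z := le_trans (le_max_left _ _) hzm
  have hzD : D ≤ z := le_trans (le_max_right _ _) hzm
  have hz1 : 1 ≤ z := one_le_z hz
  have hz0 : (0:ℝ) < z := by linarith
  have hzC : (z:ℂ) ≠ 0 := by exact_mod_cast ne_of_gt hz0
  set v : ℂ := -∑' k : ℕ, dfun α β (z+k) with hv
  -- basic norm bounds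
  have hvest : ‖v - cc α β/(z:ℂ)‖ ≤ D1/z^2 := v_est hz
  have hccz : ‖cc α β/(z:ℂ)‖ = ‖cc α β‖/z := by
    rw [norm_div, Complex.norm_real, Real.norm_eq_abs, abs_of_pos hz0]
  have hvnorm : ‖v‖ ≤ D/z := by
    have h1 : ‖v‖ ≤ ‖v - cc α β/(z:ℂ)‖ + ‖cc α β/(z:ℂ)‖ := by
      have := norm_add_le (v - cc α β/(z:ℂ)) (cc α β/(z:ℂ)); simpa using this
    have h2 : D1/z^2 ≤ D1/z := by
      rw [div_le_div_iff₀ (by positivity) hz0]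
      nlinarith [mul_le_mul_of_nonneg_left (show z ≤ z^2 by nlinarith) hD1nn]
    rw [hccz] at h1
    rw [hD, add_div]
    linarith
  have hv1 : ‖v‖ ≤ 1 := hvnorm.trans ((div_le_one hz0).mpr hzD)
  have hexp : ‖Complex.exp v - 1 - v‖ ≤ ‖v‖^2 := by
    have := Complex.norm_exp_sub_one_sub_id_le (x := v) hv1
    exact this
  have hkey : ‖Complex.exp v - 1 - cc α β/(z:ℂ)‖ ≤ (D^2 + D1)/z^2 := by
    have h3 : Complex.exp v - 1 - cc α β/(z:ℂ)
        = (Complex.exp v - 1 - v) + (v - cc α β/(z:ℂ)) := by ring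
    have h4 := (h3 ▸ norm_add_le (Complex.exp v - 1 - v) (v - cc α β/(z:ℂ)))
    have h5 : ‖v‖^2 ≤ (D/z)^2 := by
      apply pow_le_pow_left₀ (norm_nonneg v) hvnorm
    rw [div_pow] at h5
    rw [show (D^2 + D1)/z^2 = D^2/z^2 + D1/z^2 by ring]
    linarith
  -- the exponential form of the power
  have hP : (z:ℂ)^(α-β) = Complex.exp ((α-β) * (Real.log z : ℂ)) := by
    rw [Complex.cpow_def_of_ne_zero hzC, ← Complex.ofReal_log (le_of_lt hz0), mul_comm]
  have h4 : Complex.Gamma ((z:ℂ)+α) / Complex.Gamma ((z:ℂ)+β) *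
      Complex.exp (-((α-β) * (Real.log z : ℂ))) = Complex.exp v := (H_eq_exp hz).symm ▸ rfl
  have hratio : Complex.Gamma ((z:ℂ)+α) / Complex.Gamma ((z:ℂ)+β)
      = Complex.exp v * Complex.exp ((α-β) * (Real.log z : ℂ)) := by
    calc Complex.Gamma ((z:ℂ)+α) / Complex.Gamma ((z:ℂ)+β)
        = Complex.Gamma ((z:ℂ)+α) / Complex.Gamma ((z:ℂ)+β) *
          (Complex.exp (-((α-β) * (Real.log z : ℂ))) *
            Complex.exp ((α-β) * (Real.log z : ℂ))) := by
          rw [← Complex.exp_add]; simp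
      _ = (Complex.Gamma ((z:ℂ)+α) / Complex.Gamma ((z:ℂ)+β) *
          Complex.exp (-((α-β) * (Real.log z : ℂ)))) *
            Complex.exp ((α-β) * (Real.log z : ℂ)) := by ring
      _ = Complex.exp v * Complex.exp ((α-β) * (Real.log z : ℂ)) := by rw [h4]
  have heq : Complex.Gamma ((z:ℂ)+α)/Complex.Gamma ((z:ℂ)+β)
      - (z:ℂ)^(α-β) * (1 + (α-β)*(α+β-1)/(2*(z:ℂ)))
      = Complex.exp ((α-β) * (Real.log z:ℂ)) * (Complex.exp v - 1 - cc α β/(z:ℂ)) := by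
    rw [hratio, hP, cc]
    field_simp
    ring
  rw [heq]
  have hrhs : ‖(z:ℂ)^(α-β)/(z:ℂ)^2‖
      = ‖Complex.exp ((α-β) * (Real.log z:ℂ))‖ / z^2 := by
    rw [norm_div, hP, norm_pow, Complex.norm_real, Real.norm_eq_abs, abs_of_pos hz0]
  rw [hrhs, norm_mul]
  rw [show (D^2 + D1) * (‖Complex.exp ((α-β) * (Real.log z:ℂ))‖ / z^2)
    = ‖Complex.exp ((α-β) * (Real.log z:ℂ))‖ * ((D^2 + D1) / z^2) by ring]
  exact mul_le_mul_of_nonneg_left hkey (norm_nonneg _)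
end

section
/- For $\sigma > 0$ and $n, N \in \mathbb{N}$, the ratio of generalized Pochhammer symbols satisfies $\frac{[n/\sigma]_{(N^n)}^{(\sigma)}}{[-N]_{(N^n)}^{(\sigma)}} = \frac{(-1)^{nN}\, n!\, (1 + n/\sigma)_{N-1}}{(N-1)!\,(N\sigma)_n}$. -/
open scoped BigOperators

/-- The generalised Pochhammer symbol `[a]_λ^{(σ)} = ∏_{i=1}^n (a - (i-1)/σ)_{λ_i}`
(here `λ` is indexed from `0`). -/
noncomputable def genPochhammer (σ a : ℝ) (n : ℕ) (lam : ℕ → ℕ) : ℝ :=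
  ∏ i ∈ Finset.range n, (ascPochhammer ℝ (lam i)).eval (a - (i : ℝ) / σ)

lemma succ_left_eval' (n : ℕ) (x : ℝ) :
    (ascPochhammer ℝ (n+1)).eval x = x * (ascPochhammer ℝ n).eval (x+1) := by
  rw [ascPochhammer_succ_left]
  simp [Polynomial.eval_comp]

lemma refl_eval' (N : ℕ) (x : ℝ) :
    (ascPochhammer ℝ N).eval (-x - N + 1) = (-1)^N * (ascPochhammer ℝ N).eval x := by
  induction N generalizing x with
  | zero => simp
  | succ n ih =>
    rw [succ_left_eval', ascPochhammer_succ_eval]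
    push_cast
    have h2 : (-x - (n+1) + 1 + 1 : ℝ) = -x - n + 1 := by ring
    rw [h2, ih]
    ring

lemma key_identity' (σ : ℝ) (hσ : 0 < σ) (N : ℕ) (hN : 1 ≤ N) (n : ℕ) :
    (∏ i ∈ Finset.range n, (ascPochhammer ℝ N).eval (((i:ℝ)+1)/σ)) *
      (((N-1).factorial : ℝ) * (ascPochhammer ℝ n).eval ((N:ℝ)*σ)) =
    (n.factorial : ℝ) * (ascPochhammer ℝ (N-1)).eval (1 + (n:ℝ)/σ) *
      ∏ i ∈ Finset.range n, (ascPochhammer ℝ N).eval (1 + (i:ℝ)/σ) := by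
  have hσ' : σ ≠ 0 := ne_of_gt hσ
  induction n with
  | zero => simp
  | succ n ih =>
    rw [Finset.prod_range_succ, Finset.prod_range_succ, ascPochhammer_succ_eval]
    obtain ⟨M, rfl⟩ : ∃ M, N = M + 1 := ⟨N - 1, (Nat.succ_pred_eq_of_pos hN).symm⟩
    simp only [Nat.add_sub_cancel] at ih ⊢
    push_cast at ih ⊢
    have h1 : (ascPochhammer ℝ (M+1)).eval (((n:ℝ)+1)/σ)
        = (((n:ℝ)+1)/σ) * (ascPochhammer ℝ M).eval (1 + ((n:ℝ)+1)/σ) := by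
      rw [succ_left_eval']; ring_nf
    have h2 : (ascPochhammer ℝ (M+1)).eval (1 + (n:ℝ)/σ)
        = (ascPochhammer ℝ M).eval (1 + (n:ℝ)/σ) * (1 + (n:ℝ)/σ + M) := by
      rw [ascPochhammer_succ_eval]
    rw [h1, h2]
    generalize (ascPochhammer ℝ M).eval (1 + ((n:ℝ)+1)/σ) = b at *
    generalize (ascPochhammer ℝ M).eval (1 + (n:ℝ)/σ) = a at *
    generalize (ascPochhammer ℝ n).eval (((M:ℝ)+1)*σ) = p at *
    generalize (∏ i ∈ Finset.range n, (ascPochhammer ℝ (M+1)).eval (((i:ℝ)+1)/σ)) = A at *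
    generalize (∏ i ∈ Finset.range n, (ascPochhammer ℝ (M+1)).eval (1 + (i:ℝ)/σ)) = B at *
    rw [Nat.factorial_succ]
    push_cast
    field_simp
    linear_combination (b * (((M:ℝ)+1)*σ+(n:ℝ))) * ih

/-- the ratio
`[n/σ]_{(N^n)}^{(σ)} / [-N]_{(N^n)}^{(σ)} = (-1)^{nN} n! (1+n/σ)_{N-1} / ((N-1)! (Nσ)_n)`. -/
theorem genPochhammer_ratio_rect (σ : ℝ) (hσ : 0 < σ) (n N : ℕ) (hN : 1 ≤ N) :
    genPochhammer σ ((n : ℝ) / σ) n (fun _ => N) / genPochhammer σ (-(N : ℝ)) n (fun _ => N) =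
      (-1 : ℝ) ^ (n * N) * (n.factorial : ℝ) *
          (ascPochhammer ℝ (N - 1)).eval (1 + (n : ℝ) / σ) /
        (((N - 1).factorial : ℝ) * (ascPochhammer ℝ n).eval ((N : ℝ) * σ)) := by
  have hσ' : σ ≠ 0 := ne_of_gt hσ
  -- rewrite the numerator
  have hA : genPochhammer σ ((n : ℝ) / σ) n (fun _ => N)
      = ∏ i ∈ Finset.range n, (ascPochhammer ℝ N).eval (((i:ℝ)+1)/σ) := by
    rw [genPochhammer, ← Finset.prod_range_reflect]
    refine Finset.prod_congr rfl fun i hi => ?_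
    have hi' : i < n := Finset.mem_range.mp hi
    congr 1
    have h : ((n - 1 - i : ℕ) : ℝ) = (n : ℝ) - 1 - i := by
      have : (n - 1 - i : ℕ) = n - (1 + i) := by omega
      rw [this, Nat.cast_sub (by omega)]
      push_cast; ring
    rw [h]; ring
  -- rewrite the denominator
  have hB : genPochhammer σ (-(N : ℝ)) n (fun _ => N)
      = (-1:ℝ)^(n*N) * ∏ i ∈ Finset.range n, (ascPochhammer ℝ N).eval (1 + (i:ℝ)/σ) := by
    rw [genPochhammer]
    have : ∀ i ∈ Finset.range n, (ascPochhammer ℝ N).eval (-(N:ℝ) - (i:ℝ)/σ)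
        = (-1:ℝ)^N * (ascPochhammer ℝ N).eval (1 + (i:ℝ)/σ) := by
      intro i _
      have h : (-(N:ℝ) - (i:ℝ)/σ) = -(1 + (i:ℝ)/σ) - (N:ℝ) + 1 := by ring
      rw [h, refl_eval']
    rw [Finset.prod_congr rfl this, Finset.prod_mul_distrib, Finset.prod_const,
      Finset.card_range, ← pow_mul, Nat.mul_comm]
  have hCpos : ∀ i ∈ Finset.range n, 0 < (ascPochhammer ℝ N).eval (1 + (i:ℝ)/σ) := by
    intro i _
    exact ascPochhammer_pos N _ (by positivity)
  have hC : 0 < ∏ i ∈ Finset.range n, (ascPochhammer ℝ N).eval (1 + (i:ℝ)/σ) :=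
    Finset.prod_pos hCpos
  have hB0 : genPochhammer σ (-(N : ℝ)) n (fun _ => N) ≠ 0 := by
    rw [hB]
    exact mul_ne_zero (pow_ne_zero _ (by norm_num)) (ne_of_gt hC)
  have hD0 : (((N - 1).factorial : ℝ) * (ascPochhammer ℝ n).eval ((N : ℝ) * σ)) ≠ 0 := by
    have h1 : (0:ℝ) < (N:ℝ) * σ := by
      have : (1:ℝ) ≤ (N:ℝ) := by exact_mod_cast hN
      positivity
    exact mul_ne_zero (by positivity) (ne_of_gt (ascPochhammer_pos n _ h1))
  rw [div_eq_div_iff hB0 hD0, hA, hB]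
  have key := key_identity' σ hσ N hN n
  have sign : ((-1:ℝ)^(n*N)) * ((-1:ℝ)^(n*N)) = 1 := by
    rw [← mul_pow]; norm_num
  set P := (ascPochhammer ℝ (N-1)).eval (1 + (n:ℝ)/σ)
  set C := ∏ i ∈ Finset.range n, (ascPochhammer ℝ N).eval (1 + (i:ℝ)/σ)
  linear_combination key - ((n.factorial : ℝ) * P * C) * sign
end
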